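/- For n ≥ 3, the set W_{2^{n−1}−1,2} is invariant under the circle action ((r,s),(a,b)) ↦ (ra − sb, sa + rb): if (a,b) are doubly pure with ‖a‖ = ‖b‖ = 1, ⟨a,b⟩ = 0, ⟨ã,b⟩ = 0 and ⟨a,b̃⟩ = 0, and r² + s² = 1, then the pair (ra − sb, sa + rb) again satisfies ⟨ra − sb, sa + rb⟩ = 0 and ⟨(ra − sb)~, sa + rb⟩ = 0, i.e. (ra − sb, sa + rb) ∈ W_{2^{n−1}−1,2}. -/

import Mathlib

noncomputable section

/-- The Cayley–Dickson algebra `A n` of dimension `2^n` over `ℝ`: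
`A 0 = ℝ` and `A (n+1) = A n × A n`. -/
def CD : ℕ → Type
  | 0 => ℝ
  | n + 1 => CD n × CD n

namespace CD

instance instAddCommGroup : (n : ℕ) → AddCommGroup (CD n)
  | 0 => inferInstanceAs (AddCommGroup ℝ)
  | n + 1 =>
    letI := instAddCommGroup n
    inferInstanceAs (AddCommGroup (CD n × CD n))

instance instModule : (n : ℕ) → Module ℝ (CD n)
  | 0 => inferInstanceAs (Module ℝ ℝ)
  | n + 1 =>
    letI := instAddCommGroup n
    letI := instModule n
    inferInstanceAs (Module ℝ (CD n × CD n))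

/-- Conjugation: `x̄ = x` on `ℝ` and `(x₁,x₂)‾ = (x̄₁, -x₂)`. -/
protected def conj : {n : ℕ} → CD n → CD n
  | 0, x => x
  | _ + 1, x => (CD.conj x.1, -x.2)

/-- Cayley–Dickson multiplication: `(a,b)(x,y) = (ax - ȳb, ya + bx̄)`. -/
protected def mul : {n : ℕ} → CD n → CD n → CD n
  | 0, x, y => (show ℝ from x) * (show ℝ from y)
  | _ + 1, x, y =>
    (CD.mul x.1 y.1 - CD.mul (CD.conj y.2) x.2,
     CD.mul y.2 x.1 + CD.mul x.2 (CD.conj y.1))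

instance instMul (n : ℕ) : Mul (CD n) := ⟨CD.mul⟩

/-- The multiplicative unit `e₀` of `A n`. -/
def e0 : (n : ℕ) → CD n
  | 0 => (1 : ℝ)
  | n + 1 => (e0 n, 0)

/-- The element `ẽ₀ = (0, e₀)` of `A n` (junk value `0` for `n = 0`). -/
def te0 : (n : ℕ) → CD n
  | 0 => 0
  | n + 1 => (0, e0 n)

/-- The "complexification" `α̃ = (-b, a)` of `α = (a,b)` (junk value `0` for `n = 0`);
note `α̃ = α·ẽ₀`. -/
def tilde : {n : ℕ} → CD n → CD n
  | 0, _ => 0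
  | _ + 1, x => (-x.2, x.1)

/-- The standard inner product on `A n ≅ ℝ^{2^n}`. -/
protected def inner : {n : ℕ} → CD n → CD n → ℝ
  | 0, x, y => (show ℝ from x) * (show ℝ from y)
  | _ + 1, x, y => CD.inner x.1 y.1 + CD.inner x.2 y.2

/-- The euclidean norm on `A n`. -/
protected def norm {n : ℕ} (x : CD n) : ℝ := Real.sqrt (CD.inner x x)

/-- `x` is pure if its trace `t(x) = x + x̄` vanishes. -/
def IsPure {n : ℕ} (x : CD n) : Prop := x + CD.conj x = 0

/-- `x = (a,b)` is doubly pure if both `a` and `b` are pure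
(equivalently, both `x` and `x̃` are pure). -/
def IsDoublyPure : {n : ℕ} → CD n → Prop
  | 0, x => x = 0
  | _ + 1, x => IsPure x.1 ∧ IsPure x.2

/-- The associator `(x,y,z) = (xy)z - x(yz)`. -/
def assoc {n : ℕ} (x y z : CD n) : CD n := (x * y) * z - x * (y * z)

/-- The subspace `ℍ_a`: the real span of `{e₀, ã, a, ẽ₀}`. -/
def Ha {n : ℕ} (a : CD n) : Submodule ℝ (CD n) :=
  Submodule.span ℝ {e0 n, tilde a, a, te0 n}

/-- The orthogonal complement `ℍ_a^⊥` of `ℍ_a` in `A n`. -/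
def HaPerp {n : ℕ} (a : CD n) : Set (CD n) :=
  {x | ∀ y ∈ Ha a, CD.inner x y = 0}

/-- The element `ε = (ẽ₀, 0)` of `A (n+1)`. -/
def eps (n : ℕ) : CD (n + 1) := (te0 n, 0)

/-- `α̂ = (b,a)` for `α = (a,b) ∈ A (n+1)`. -/
def hat {n : ℕ} (x : CD (n + 1)) : CD (n + 1) := (x.2, x.1)

/-- The element `(a, b)` of `A (n+1) = A n × A n`. -/
def pair {n : ℕ} (a b : CD n) : CD (n + 1) := (a, b)

end CD

/-- The real Stiefel manifold `V_{2^n-2,2}`: orthonormal pairs of doubly pure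
elements of `A n`. -/
def V2 (n : ℕ) : Set (CD n × CD n) :=
  {p | CD.IsDoublyPure p.1 ∧ CD.IsDoublyPure p.2 ∧
    CD.norm p.1 = 1 ∧ CD.norm p.2 = 1 ∧ CD.inner p.1 p.2 = 0}

/-- The complex Stiefel manifold `W_{2^{n-1}-1,2}` realized as the pairs
`(a,b) ∈ V_{2^n-2,2}` with `b ∈ ℍ_a^⊥`. -/
def W (n : ℕ) : Set (CD n × CD n) := {p ∈ V2 n | p.2 ∈ CD.HaPerp p.1}

namespace CD

lemma add_def' {n} (x y : CD (n+1)) : x + y = (x.1 + y.1, x.2 + y.2) := rfl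
lemma smul_def' {n} (r : ℝ) (x : CD (n+1)) : r • x = (r • x.1, r • x.2) := rfl
lemma sub_def' {n} (x y : CD (n+1)) : x - y = (x.1 - y.1, x.2 - y.2) := rfl

lemma inner_comm : ∀ {n} (x y : CD n), CD.inner x y = CD.inner y x
  | 0, x, y => mul_comm _ _
  | n+1, x, y => by
    show CD.inner x.1 y.1 + CD.inner x.2 y.2 = CD.inner y.1 x.1 + CD.inner y.2 x.2
    rw [inner_comm x.1, inner_comm x.2]

lemma inner_add_left : ∀ {n} (x y z : CD n), CD.inner (x + y) z = CD.inner x z + CD.inner y z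
  | 0, x, y, z => add_mul (R := ℝ) _ _ _
  | n+1, x, y, z => by
    show CD.inner (x.1 + y.1) z.1 + CD.inner (x.2 + y.2) z.2 = _
    rw [inner_add_left, inner_add_left]
    show _ = CD.inner x.1 z.1 + CD.inner x.2 z.2 + (CD.inner y.1 z.1 + CD.inner y.2 z.2)
    ring

lemma inner_smul_left : ∀ {n} (r : ℝ) (x z : CD n), CD.inner (r • x) z = r * CD.inner x z
  | 0, r, x, z => by
    show (r • (show ℝ from x)) * (show ℝ from z) = r * ((show ℝ from x) * (show ℝ from z))
    rw [smul_eq_mul]; ring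
  | n+1, r, x, z => by
    show CD.inner (r • x.1) z.1 + CD.inner (r • x.2) z.2 = _
    rw [inner_smul_left, inner_smul_left]
    show _ = r * (CD.inner x.1 z.1 + CD.inner x.2 z.2)
    ring

lemma inner_sub_left {n} (x y z : CD n) : CD.inner (x - y) z = CD.inner x z - CD.inner y z := by
  have := inner_add_left (x - y) y z
  rw [sub_add_cancel] at this
  linarith

lemma inner_add_right {n} (x y z : CD n) : CD.inner z (x + y) = CD.inner z x + CD.inner z y := by
  rw [inner_comm, inner_add_left, inner_comm x, inner_comm y]

lemma inner_smul_right {n} (r : ℝ) (x z : CD n) : CD.inner z (r • x) = r * CD.inner z x := by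
  rw [inner_comm, inner_smul_left, inner_comm]

lemma inner_sub_right {n} (x y z : CD n) : CD.inner z (x - y) = CD.inner z x - CD.inner z y := by
  rw [CD.inner_comm, inner_sub_left, CD.inner_comm x, CD.inner_comm y]

lemma inner_self_nonneg : ∀ {n} (x : CD n), 0 ≤ CD.inner x x
  | 0, x => mul_self_nonneg _
  | n+1, x => add_nonneg (inner_self_nonneg x.1) (inner_self_nonneg x.2)

lemma inner_self_eq_one {n} (x : CD n) (h : CD.norm x = 1) : CD.inner x x = 1 := by
  have := Real.sq_sqrt (inner_self_nonneg x)
  rw [CD.norm] at h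
  rw [h] at this
  linarith [this]

lemma conj_e0 : ∀ {n}, CD.conj (e0 n) = e0 n
  | 0 => rfl
  | n+1 => by show (CD.conj (e0 n), -0) = (e0 n, 0); rw [conj_e0, neg_zero]

lemma inner_conj_e0 : ∀ {n} (x : CD n), CD.inner (CD.conj x) (e0 n) = CD.inner x (e0 n)
  | 0, x => rfl
  | n+1, x => by
    show CD.inner (CD.conj x.1) (e0 n) + CD.inner (-x.2) 0 = CD.inner x.1 (e0 n) + CD.inner x.2 0
    have h0 : ∀ (y : CD n), CD.inner y 0 = 0 := fun y => by
      have := inner_smul_right (0:ℝ) 0 y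
      simpa using this
    rw [inner_conj_e0, h0, h0]

lemma pure_inner_e0 {n} (x : CD n) (h : IsPure x) : CD.inner x (e0 n) = 0 := by
  have h2 : CD.inner (x + CD.conj x) (e0 n) = 0 := by rw [h]; simpa using inner_smul_left 0 (0 : CD n) (e0 n)
  rw [inner_add_left, inner_conj_e0] at h2
  linarith

lemma conj_add : ∀ {n} (x y : CD n), CD.conj (x + y) = CD.conj x + CD.conj y
  | 0, x, y => rfl
  | n+1, x, y => by
    show (CD.conj (x.1 + y.1), -(x.2 + y.2)) = CD.conj x + CD.conj y
    rw [conj_add x.1 y.1, neg_add]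
    rfl

lemma conj_smul : ∀ {n} (r : ℝ) (x : CD n), CD.conj (r • x) = r • CD.conj x
  | 0, r, x => rfl
  | n+1, r, x => by
    show (CD.conj (r • x.1), -(r • x.2)) = r • CD.conj x
    rw [conj_smul r x.1]
    show _ = (r • CD.conj x.1, r • (-x.2))
    rw [smul_neg]

lemma isPure_add {n} {x y : CD n} (hx : IsPure x) (hy : IsPure y) : IsPure (x + y) := by
  unfold IsPure at *
  rw [conj_add]
  rw [show x + y + (CD.conj x + CD.conj y) = (x + CD.conj x) + (y + CD.conj y) by abel, hx, hy, add_zero]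

lemma isPure_smul {n} (r : ℝ) {x : CD n} (hx : IsPure x) : IsPure (r • x) := by
  unfold IsPure at *
  rw [conj_smul, ← smul_add, hx, smul_zero]

lemma isPure_sub {n} {x y : CD n} (hx : IsPure x) (hy : IsPure y) : IsPure (x - y) := by
  rw [sub_eq_add_neg, ← neg_one_smul ℝ y]
  exact isPure_add hx (isPure_smul _ hy)

lemma tilde_smul {n} (r : ℝ) (x : CD (n+1)) : tilde (r • x) = r • tilde x := by
  show ((-(r • x).2, (r • x).1) : CD n × CD n) = r • (-x.2, x.1)
  rw [smul_def']
  show (-(r • x.2), r • x.1) = (r • -x.2, r • x.1)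
  rw [smul_neg]

lemma tilde_sub {n} (x y : CD (n+1)) : tilde (x - y) = tilde x - tilde y := by
  show ((-(x - y).2, (x - y).1) : CD n × CD n) = tilde x - tilde y
  rw [sub_def']
  show (-(x.2 - y.2), x.1 - y.1) = ((-x.2) - (-y.2), x.1 - y.1)
  rw [neg_sub, sub_neg_eq_add, neg_add_eq_sub]

lemma inner_tilde_self {n} (x : CD (n+1)) : CD.inner (tilde x) x = 0 := by
  show CD.inner (-x.2) x.1 + CD.inner x.1 x.2 = 0
  have : CD.inner (-x.2) x.1 = -CD.inner x.2 x.1 := by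
    rw [← neg_one_smul ℝ x.2, inner_smul_left]; ring
  rw [this, inner_comm x.1 x.2]; ring

lemma inner_tilde_left {n} (x y : CD (n+1)) : CD.inner (tilde x) y = -CD.inner x (tilde y) := by
  show CD.inner (-x.2) y.1 + CD.inner x.1 y.2 = -(CD.inner x.1 (-y.2) + CD.inner x.2 y.1)
  have h1 : CD.inner (-x.2) y.1 = -CD.inner x.2 y.1 := by
    rw [← neg_one_smul ℝ x.2, inner_smul_left]; ring
  have h2 : CD.inner x.1 (-y.2) = -CD.inner x.1 y.2 := by
    rw [← neg_one_smul ℝ y.2, inner_smul_right]; ring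
  rw [h1, h2]; ring

lemma inner_dp_e0 {n} (x : CD (n+1)) (h : IsDoublyPure x) : CD.inner x (e0 (n+1)) = 0 := by
  show CD.inner x.1 (e0 n) + CD.inner x.2 0 = 0
  have h0 : CD.inner x.2 (0 : CD n) = 0 := by
    have := inner_smul_right (0:ℝ) 0 x.2; simpa using this
  rw [pure_inner_e0 x.1 h.1, h0, add_zero]

lemma inner_dp_te0 {n} (x : CD (n+1)) (h : IsDoublyPure x) : CD.inner x (te0 (n+1)) = 0 := by
  show CD.inner x.1 0 + CD.inner x.2 (e0 n) = 0
  have h0 : CD.inner x.1 (0 : CD n) = 0 := by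
    have := inner_smul_right (0:ℝ) 0 x.1; simpa using this
  rw [pure_inner_e0 x.2 h.2, h0, add_zero]

end CD

/-- For `n ≥ 3`, `W_{2^{n-1}-1,2}` is invariant under the circle action
`((r,s),(a,b)) ↦ (ra - sb, sa + rb)`. -/
theorem statement8 (n : ℕ) (hn : 3 ≤ n) (a b : CD n)
    (ha : CD.IsDoublyPure a) (hb : CD.IsDoublyPure b)
    (hna : CD.norm a = 1) (hnb : CD.norm b = 1)
    (h1 : CD.inner a b = 0) (h2 : CD.inner (CD.tilde a) b = 0)
    (h3 : CD.inner a (CD.tilde b) = 0)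
    (r s : ℝ) (hrs : r ^ 2 + s ^ 2 = 1) :
    CD.inner (r • a - s • b) (s • a + r • b) = 0 ∧
    CD.inner (CD.tilde (r • a - s • b)) (s • a + r • b) = 0 ∧
    (r • a - s • b, s • a + r • b) ∈ W n := by
  obtain ⟨m, rfl⟩ : ∃ m, n = m + 1 := ⟨n - 1, by omega⟩
  have hia : CD.inner a a = 1 := CD.inner_self_eq_one a hna
  have hib : CD.inner b b = 1 := CD.inner_self_eq_one b hnb
  have hba : CD.inner b a = 0 := by rw [CD.inner_comm]; exact h1
  have hta : CD.inner (CD.tilde a) a = 0 := CD.inner_tilde_self a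
  have htb : CD.inner (CD.tilde b) b = 0 := CD.inner_tilde_self b
  have htba : CD.inner (CD.tilde b) a = 0 := by rw [CD.inner_comm]; exact h3
  have key1 : CD.inner (r • a - s • b) (s • a + r • b) = 0 := by
    simp only [CD.inner_sub_left, CD.inner_add_right, CD.inner_smul_left, CD.inner_smul_right,
      hia, hib, h1, hba]
    ring
  have key2 : CD.inner (CD.tilde (r • a - s • b)) (s • a + r • b) = 0 := by
    rw [CD.tilde_sub, CD.tilde_smul, CD.tilde_smul]
    simp only [CD.inner_sub_left, CD.inner_add_right, CD.inner_smul_left, CD.inner_smul_right,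
      hta, htb, h2, htba]
    ring
  have hdp1 : CD.IsDoublyPure (r • a - s • b) :=
    ⟨CD.isPure_sub (CD.isPure_smul r ha.1) (CD.isPure_smul s hb.1),
     CD.isPure_sub (CD.isPure_smul r ha.2) (CD.isPure_smul s hb.2)⟩
  have hdp2 : CD.IsDoublyPure (s • a + r • b) :=
    ⟨CD.isPure_add (CD.isPure_smul s ha.1) (CD.isPure_smul r hb.1),
     CD.isPure_add (CD.isPure_smul s ha.2) (CD.isPure_smul r hb.2)⟩
  have hn1 : CD.norm (r • a - s • b) = 1 := by
    have : CD.inner (r • a - s • b) (r • a - s • b) = 1 := by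
      simp only [CD.inner_sub_left, CD.inner_sub_right, CD.inner_smul_left,
        CD.inner_smul_right, hia, hib, h1, hba]
      nlinarith [hrs]
    rw [CD.norm, this, Real.sqrt_one]
  have hn2 : CD.norm (s • a + r • b) = 1 := by
    have : CD.inner (s • a + r • b) (s • a + r • b) = 1 := by
      simp only [CD.inner_add_left, CD.inner_add_right, CD.inner_smul_left, CD.inner_smul_right,
        hia, hib, h1, hba]
      nlinarith [hrs]
    rw [CD.norm, this, Real.sqrt_one]
  refine ⟨key1, key2, ⟨⟨hdp1, hdp2, hn1, hn2, key1⟩, ?_⟩⟩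
  intro y hy
  refine Submodule.span_induction ?_ ?_ ?_ ?_ hy
  · intro x hx
    simp only [Set.mem_insert_iff, Set.mem_singleton_iff] at hx
    rcases hx with rfl | rfl | rfl | rfl
    · exact CD.inner_dp_e0 _ hdp2
    · rw [CD.inner_comm]; exact key2
    · rw [CD.inner_comm]; exact key1
    · exact CD.inner_dp_te0 _ hdp2
  · have := CD.inner_smul_right (0:ℝ) 0 (s • a + r • b); simpa using this
  · intro x y _ _ hx hy
    rw [CD.inner_add_right, hx, hy, add_zero]
  · intro c x _ hx
    rw [CD.inner_smul_right, hx, mul_zero]
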